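/- arXiv:2202.12489 — 2 statements merged into one kernel-verified Lean document; each statement's English description precedes it below -/
import Mathlib

section
/- Let n ≥ 2. For every t with 1 ≤ t ≤ n−1, the map Φ_t commutes with both E_n and F_n: Φ_t ∘ E_n = E_n ∘ Φ_t and Φ_t ∘ F_n = F_n ∘ Φ_t as K-linear endomorphisms of T_n. (Equivariance of the braid group action with respect to the U_q(gl(1|1))-action; in particular each Φ_t preserves every highest weight space H_k.) -/
open scoped BigOperators

set_option maxHeartbeats 1000000
set_option synthInstance.maxHeartbeats 400000

noncomputable section

/-- The ground field `K = ℂ(q)`. -/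
abbrev K : Type := RatFunc ℂ

/-- The variable `q` of `K = ℂ(q)`. -/
def q : K := RatFunc.X

/-- `T n` models the `n`-th tensor power of the vector representation of
`U_q(gl(1|1))`, as functions on binary strings of length `n`. -/
abbrev T (n : ℕ) : Type := (Fin n → Fin 2) → K

/-- The standard basis vector `v_α` of `T n`. -/
def v (n : ℕ) (α : Fin n → Fin 2) : T n := fun β => if β = α then 1 else 0

/-- `v₀^{⊗ n}`, the basis vector of the all-zeroes string. -/
def v0 (n : ℕ) : T n := v n (fun _ => 0)

/-- `w n i` is the basis vector whose string has a single `1` in (1-indexed) position `i`. -/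
def w (n i : ℕ) : T n := v n (fun j => if (j : ℕ) + 1 = i then 1 else 0)

/-- `e i = -w_i + q⁻¹ w_{i+1}`. -/
def e (n i : ℕ) : T n := -(w n i) + q⁻¹ • w n (i + 1)

/-- The `R`-matrix on a pair of strands: entry `Rmat out inp`. -/
def Rmat : Fin 2 × Fin 2 → Fin 2 × Fin 2 → K := fun out inp =>
  if inp = (0, 0) then (if out = (0, 0) then q else 0)
  else if inp = (1, 0) then (if out = (0, 1) then 1 else 0)
  else if inp = (0, 1) then
    (if out = (1, 0) then 1 else if out = (0, 1) then q - q⁻¹ else 0)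
  else (if out = (1, 1) then -q⁻¹ else 0)

/-- The `R`-matrix acting at positions `i`, `j` (0-indexed) of `T n`. -/
def PhiAux (n : ℕ) (i j : Fin n) : T n →ₗ[K] T n where
  toFun f := fun β => ∑ p : Fin 2 × Fin 2,
    Rmat (β i, β j) p * f (Function.update (Function.update β i p.1) j p.2)
  map_add' f g := by
    funext β
    try dsimp only
    simp only [Pi.add_apply]
    rw [← Finset.sum_add_distrib]
    exact Finset.sum_congr rfl fun p _ => by simp [mul_add]
  map_smul' c f := by
    funext β
    try dsimp only
    simp only [Pi.smul_apply, smul_eq_mul, RingHom.id_apply]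
    rw [Finset.mul_sum]
    exact Finset.sum_congr rfl fun p _ => by ring

/-- `Phi n t` is the map induced by the braid generator `σ_t` (with `1 ≤ t ≤ n-1`),
acting through the `R`-matrix at (1-indexed) positions `(t, t+1)`. -/
def Phi (n t : ℕ) : T n →ₗ[K] T n :=
  if h : 0 < t ∧ t < n then PhiAux n ⟨t - 1, by omega⟩ ⟨t, h.2⟩ else 0

/-- The action of `E` on `T n`. -/
def En (n : ℕ) : T n →ₗ[K] T n where
  toFun f := fun β => ∑ i : Fin n,
    if β i = 0 then
      ((-1 : K) ^ (Finset.univ.filter (fun j : Fin n => j < i ∧ β j = 1)).card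
        * q⁻¹ ^ (n - 1 - (i : ℕ))) * f (Function.update β i 1)
    else 0
  map_add' f g := by
    funext β
    try dsimp only
    simp only [Pi.add_apply]
    rw [← Finset.sum_add_distrib]
    refine Finset.sum_congr rfl fun i _ => ?_
    by_cases h : β i = 0 <;> simp [h, mul_add]
  map_smul' c f := by
    funext β
    try dsimp only
    simp only [Pi.smul_apply, smul_eq_mul, RingHom.id_apply]
    rw [Finset.mul_sum]
    refine Finset.sum_congr rfl fun i _ => ?_
    by_cases h : β i = 0 <;> simp [h] <;> ring

/-- The action of `F` on `T n`. -/
def Fn (n : ℕ) : T n →ₗ[K] T n where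
  toFun f := fun β => ∑ i : Fin n,
    if β i = 1 then
      ((-1 : K) ^ (Finset.univ.filter (fun j : Fin n => j < i ∧ β j = 1)).card
        * q ^ (i : ℕ)) * f (Function.update β i 0)
    else 0
  map_add' f g := by
    funext β
    try dsimp only
    simp only [Pi.add_apply]
    rw [← Finset.sum_add_distrib]
    refine Finset.sum_congr rfl fun i _ => ?_
    by_cases h : β i = 1 <;> simp [h, mul_add]
  map_smul' c f := by
    funext β
    try dsimp only
    simp only [Pi.smul_apply, smul_eq_mul, RingHom.id_apply]
    rw [Finset.mul_sum]
    refine Finset.sum_congr rfl fun i _ => ?_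
    by_cases h : β i = 1 <;> simp [h] <;> ring

/-- The number of `1`s in a binary string. -/
def wt {n : ℕ} (α : Fin n → Fin 2) : ℕ := (Finset.univ.filter (fun i => α i = 1)).card

/-- `Tk n k` is the span of the basis vectors with exactly `k` entries equal to `1`. -/
def Tk (n k : ℕ) : Submodule K (T n) :=
  Submodule.span K {f : T n | ∃ α, wt α = k ∧ f = v n α}

/-- `Hk n k` is the space of highest weight vectors of weight `(n-k)ε₁ + kε₂`. -/
def Hk (n k : ℕ) : Submodule K (T n) := LinearMap.ker (En n) ⊓ Tk n k

/-- The bilinear product `m` on `T n`. -/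
def mul2 (n : ℕ) (f g : T n) : T n := fun γ =>
  ∑ α : Fin n → Fin 2,
    if (∀ i, α i = 1 → γ i = 1) then
      ((-1 : K) ^ (∑ p ∈ Finset.univ.filter (fun p : Fin n × Fin n => p.1 < p.2),
          (((fun i => if α i = 1 then 0 else γ i) p.1 : Fin 2) : ℕ) * ((α p.2 : Fin 2) : ℕ)))
        * f α * g (fun i => if α i = 1 then 0 else γ i)
    else 0

/-- The left-iterated product `Ψ(u_1, …, u_k) = m(…m(m(u_1,u_2),u_3)…,u_k)`. -/
def Psi (n : ℕ) : (k : ℕ) → (Fin k → T n) → T n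
  | 0, _ => v0 n
  | 1, u => u 0
  | (k + 2), u => mul2 n (Psi n (k + 1) (fun i => u i.castSucc)) (u (Fin.last (k + 1)))

/-- Concatenation (tensor product) `T a ⊗ T b → T (a + b)`. -/
def conc {a b : ℕ} (f : T a) (g : T b) : T (a + b) := fun γ =>
  f (fun i => γ (Fin.castAdd b i)) * g (fun i => γ (Fin.natAdd a i))

/-- Identification `T a ≃ T b` for `a = b`. -/
def castT {a b : ℕ} (h : a = b) (f : T a) : T b := fun γ => f (fun i => γ (Fin.cast h i))

/-- The block vector `Θ_b = Σ_{r=0}^{b-1} (-1)^r q^{-(b-1-r)} v_{β(r)}`. -/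
def Theta (b : ℕ) : T b :=
  ∑ r : Fin b, ((-1 : K) ^ (r : ℕ) * q⁻¹ ^ (b - 1 - (r : ℕ))) •
    v b (fun i => if i = r then 0 else 1)

/-- The map induced by the braid `λ = σ_{n-1} ⋯ σ_1`. -/
def Lam (n : ℕ) : T n →ₗ[K] T n :=
  ((List.range (n - 1)).map (fun t => Phi n (t + 1))).foldl (fun acc g => g ∘ₗ acc) LinearMap.id

/-- The Vandermonde-type matrix `B(n)`. -/
def B (n : ℕ) : Matrix (Fin n) (Fin n) K :=
  fun i j => q ^ ((i : ℤ) * (n : ℤ) * ((n : ℤ) - 1 - 2 * (j : ℤ)))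

/-- `C(n) = B(n)⁻¹`. -/
def Cmat (n : ℕ) : Matrix (Fin n) (Fin n) K := (B n)⁻¹

/-- A combinatorial string `(a_1, b_1, a_2, b_2, …, b_l, a_{l+1})`. -/
structure GString where
  l : ℕ
  a : Fin (l + 1) → ℕ
  b : Fin l → ℕ

/-- Membership of a string in `S_k` (for strands number `n`). -/
def memSk (n k : ℕ) (s : GString) : Prop :=
  (∀ i, 2 ≤ s.b i) ∧ (∑ i, (s.b i - 1)) = k ∧ ((∑ i, s.a i) + ∑ i, s.b i) = n

/-- The length of the string, computed blockwise. -/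
def lenOf : (l : ℕ) → (Fin (l + 1) → ℕ) → (Fin l → ℕ) → ℕ
  | 0, a, _ => a 0
  | (l + 1), a, b => (a 0 + b 0) + lenOf l (fun i => a i.succ) (fun i => b i.succ)

/-- The concatenation `v₀^{⊗a_1} ⊗ Θ_{b_1} ⊗ ⋯ ⊗ Θ_{b_l} ⊗ v₀^{⊗a_{l+1}}`. -/
def rawphi : (l : ℕ) → (a : Fin (l + 1) → ℕ) → (b : Fin l → ℕ) → T (lenOf l a b)
  | 0, a, _ => v0 (a 0)
  | (l + 1), a, b =>
      conc (conc (v0 (a 0)) (Theta (b 0)))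
        (rawphi l (fun i => a i.succ) (fun i => b i.succ))

/-- `φ(s) ∈ T n`, the vector associated to a string `s`. -/
def phi (n : ℕ) (s : GString) : T n :=
  if h : lenOf s.l s.a s.b = n then castT h (rawphi s.l s.a s.b) else 0


namespace Stmt18

variable {n : ℕ}

def cnt (β : Fin n → Fin 2) (k : Fin n) : ℕ :=
  (Finset.univ.filter fun m : Fin n => m < k ∧ β m = 1).card

lemma En_apply (f : T n) (β : Fin n → Fin 2) :
    En n f β = ∑ i : Fin n, if β i = 0 then
      ((-1 : K) ^ cnt β i * q⁻¹ ^ (n - 1 - (i : ℕ))) * f (Function.update β i 1) else 0 := rfl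

lemma Fn_apply (f : T n) (β : Fin n → Fin 2) :
    Fn n f β = ∑ i : Fin n, if β i = 1 then
      ((-1 : K) ^ cnt β i * q ^ (i : ℕ)) * f (Function.update β i 0) else 0 := rfl

def Uu (i j : Fin n) (β : Fin n → Fin 2) (x y : Fin 2) : Fin n → Fin 2 :=
  Function.update (Function.update β i x) j y

lemma PhiAux_apply (i j : Fin n) (f : T n) (β : Fin n → Fin 2) :
    PhiAux n i j f β = ∑ p : Fin 2 × Fin 2,
      Rmat (β i, β j) p * f (Uu i j β p.1 p.2) := rfl

variable {i j : Fin n}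

section
variable (hne : i ≠ j)
include hne

lemma Uu_apply_i (β x y) : Uu i j β x y i = x := by
  simp [Uu, Function.update_of_ne hne, Function.update_self]

lemma Uu_apply_j (β x y) : Uu i j β x y j = y := by
  simp [Uu, Function.update_self]

lemma Uu_apply_other (β x y) {k : Fin n} (hki : k ≠ i) (hkj : k ≠ j) :
    Uu i j β x y k = β k := by
  simp [Uu, Function.update_of_ne hki, Function.update_of_ne hkj]

lemma update_Uu_i (β x y z) :
    Function.update (Uu i j β x y) i z = Uu i j β z y := by
  simp only [Uu, Function.update_comm hne.symm, Function.update_idem]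

lemma update_Uu_j (β x y z) :
    Function.update (Uu i j β x y) j z = Uu i j β x z := by
  simp only [Uu, Function.update_idem]

lemma Uu_update_i (β x y z) : Uu i j (Function.update β i z) x y = Uu i j β x y := by
  simp only [Uu, Function.update_idem]

lemma Uu_update_j (β x y z) : Uu i j (Function.update β j z) x y = Uu i j β x y := by
  simp only [Uu, Function.update_comm hne, Function.update_idem]

lemma Uu_update_other (β x y z) {k : Fin n} (hki : k ≠ i) (hkj : k ≠ j) :
    Uu i j (Function.update β k z) x y = Function.update (Uu i j β x y) k z := by
  simp only [Uu, Function.update_comm hki, Function.update_comm hkj]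

lemma Uu_snd_self (β x) : Uu i j β x (β j) = Function.update β i x := by
  have : (Function.update β i x) j = β j := Function.update_of_ne hne.symm _ _
  rw [Uu, ← this, Function.update_eq_self]

lemma Uu_fst_self (β y) : Uu i j β (β i) y = Function.update β j y := by
  rw [Uu, Function.update_eq_self]

end

lemma cnt_congr (γ δ : Fin n → Fin 2) (k : Fin n) (h : ∀ m, m < k → γ m = δ m) :
    cnt γ k = cnt δ k := by
  unfold cnt
  congr 1
  apply Finset.filter_congr
  intro m _
  constructor
  · rintro ⟨h1, h2⟩; exact ⟨h1, by rw [← h m h1]; exact h2⟩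
  · rintro ⟨h1, h2⟩; exact ⟨h1, by rw [h m h1]; exact h2⟩

lemma cnt_card (γ : Fin n → Fin 2) (k : Fin n) :
    cnt γ k = ∑ m : Fin n, if m < k ∧ γ m = 1 then 1 else 0 := by
  rw [cnt, Finset.card_filter]

end Stmt18
namespace Stmt18

variable {n : ℕ} {i j : Fin n}

lemma cnt_succ (hij : (i : ℕ) + 1 = (j : ℕ)) (γ : Fin n → Fin 2) :
    cnt γ j = cnt γ i + (if γ i = 1 then 1 else 0) := by
  have hij' : i < j := by rw [Fin.lt_def]; omega
  rw [cnt_card, cnt_card]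
  have : ∀ m : Fin n, (if m < j ∧ γ m = 1 then (1:ℕ) else 0)
      = (if m < i ∧ γ m = 1 then 1 else 0) + (if m = i ∧ γ m = 1 then 1 else 0) := by
    intro m
    have hmj : m < j ↔ (m < i ∨ m = i) := by
      rw [Fin.lt_def, Fin.lt_def, ← Fin.val_eq_val]; omega
    by_cases h1 : γ m = 1
    · by_cases h2 : m < i
      · have : m ≠ i := ne_of_lt h2
        simp [h1, h2, hmj, this]
      · by_cases h3 : m = i <;> simp [h1, h2, h3, hmj, hij']
    · simp [h1]
  simp only [this, Finset.sum_add_distrib]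
  congr 1
  simp only [ite_and]
  rw [Finset.sum_ite_eq' Finset.univ i (fun m => if γ m = 1 then 1 else 0)]
  simp

lemma cnt_eq_of (γ δ : Fin n → Fin 2) (k : Fin n) (hne : i ≠ j)
    (h : ∀ m, m ≠ i → m ≠ j → γ m = δ m)
    (hw : (if γ i = 1 then (1:ℕ) else 0) + (if γ j = 1 then 1 else 0)
        = (if δ i = 1 then 1 else 0) + (if δ j = 1 then 1 else 0))
    (hk : i < k ↔ j < k) : cnt γ k = cnt δ k := by
  rw [cnt_card, cnt_card]
  rw [← Finset.sum_erase_add _ _ (Finset.mem_univ j),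
      ← Finset.sum_erase_add _ _ (Finset.mem_erase.mpr ⟨hne, Finset.mem_univ i⟩)]
  rw [← Finset.sum_erase_add (Finset.univ) _ (Finset.mem_univ j),
      ← Finset.sum_erase_add _ _ (Finset.mem_erase.mpr ⟨hne, Finset.mem_univ i⟩)]
  rw [add_assoc, add_assoc]
  congr 1
  · apply Finset.sum_congr rfl
    intro m hm
    simp only [Finset.mem_erase] at hm
    rw [h m hm.1 hm.2.1]
  · by_cases hik : i < k
    · have hjk : j < k := hk.mp hik
      simpa [hik, hjk] using hw
    · have hjk : ¬ j < k := fun hh => hik (hk.mpr hh)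
      simp [hik, hjk]

end Stmt18
namespace Stmt18

variable {n : ℕ} {i j : Fin n}

lemma fin2 (x : Fin 2) : x = 0 ∨ x = 1 := by omega

lemma Rmat_wt {o p : Fin 2 × Fin 2} (h : Rmat o p ≠ 0) :
    (if o.1 = 1 then (1:ℕ) else 0) + (if o.2 = 1 then 1 else 0)
      = (if p.1 = 1 then 1 else 0) + (if p.2 = 1 then 1 else 0) := by
  rcases o with ⟨o1, o2⟩; rcases p with ⟨p1, p2⟩
  rcases fin2 o1 with h1 | h1 <;> rcases fin2 o2 with h2 | h2 <;>
    rcases fin2 p1 with h3 | h3 <;> rcases fin2 p2 with h4 | h4 <;>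
    subst h1 h2 h3 h4 <;> simp_all [Rmat, Prod.ext_iff, Fin.ext_iff]

lemma cnt_Uu_i (hne : i ≠ j) (hij : (i:ℕ) + 1 = (j:ℕ)) (β x y) :
    cnt (Uu i j β x y) i = cnt β i := by
  apply cnt_congr
  intro m hm
  have h1 : m ≠ i := ne_of_lt hm
  have h2 : m ≠ j := by
    rw [← Fin.val_ne_iff]; rw [Fin.lt_def] at hm; omega
  exact Uu_apply_other hne β x y h1 h2

lemma cnt_Uu_j (hne : i ≠ j) (hij : (i:ℕ) + 1 = (j:ℕ)) (β x y) :
    cnt (Uu i j β x y) j = cnt β i + (if x = 1 then 1 else 0) := by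
  rw [cnt_succ hij, cnt_Uu_i hne hij, Uu_apply_i hne]

lemma commE (hij : (i:ℕ) + 1 = (j:ℕ)) (f : T n) (β : Fin n → Fin 2) :
    PhiAux n i j (En n f) β = En n (PhiAux n i j f) β := by
  have hne : i ≠ j := by rw [Ne, ← Fin.val_eq_val]; omega
  rw [PhiAux_apply, En_apply]
  simp only [En_apply, PhiAux_apply, Finset.mul_sum]
  rw [Finset.sum_comm]
  rw [← Finset.sum_erase_add _ _ (Finset.mem_univ j),
      ← Finset.sum_erase_add _ _ (Finset.mem_erase.mpr ⟨hne, Finset.mem_univ i⟩)]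
  rw [← Finset.sum_erase_add (Finset.univ) _ (Finset.mem_univ j),
      ← Finset.sum_erase_add _ _ (Finset.mem_erase.mpr ⟨hne, Finset.mem_univ i⟩)]
  rw [add_assoc, add_assoc]
  congr 1
  · -- rest terms
    apply Finset.sum_congr rfl
    intro k hk
    simp only [Finset.mem_erase] at hk
    have hki := hk.1
    have hkj := hk.2.1
    have hik : i ≠ k := fun h => hki h.symm
    have hjk : j ≠ k := fun h => hkj h.symm
    have hlt : i < k ↔ j < k := by
      rw [← Fin.val_ne_iff] at hki hkj
      rw [Fin.lt_def, Fin.lt_def]; omega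
    simp only [Uu_apply_other hne, Uu_update_other hne,
      Function.update_of_ne hik, Function.update_of_ne hjk, hki, hkj,
      ne_eq, not_false_iff]
    by_cases hk0 : β k = 0
    · simp only [hk0, if_true, if_pos rfl]
      apply Finset.sum_congr rfl
      intro p _
      by_cases hR : Rmat (β i, β j) p = 0
      · simp [hR]
      · have hcnt : cnt (Uu i j β p.1 p.2) k = cnt β k := by
          apply cnt_eq_of _ _ _ hne
          · intro m h1 h2; exact Uu_apply_other hne β _ _ h1 h2
          · simpa [Uu_apply_i hne, Uu_apply_j hne] using (Rmat_wt hR).symm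
          · exact hlt
        rw [hcnt]; ring
    · simp [hk0]
  · -- i and j terms
    have hjn := j.isLt
    have hQ : n - 1 - (i:ℕ) = (n - 1 - (j:ℕ)) + 1 := by omega
    have hq : q ≠ 0 := RatFunc.X_ne_zero
    simp only [Uu_apply_i hne, Uu_apply_j hne, update_Uu_i hne, update_Uu_j hne,
      Uu_update_i hne, Uu_update_j hne, Function.update_self,
      Function.update_of_ne hne, Function.update_of_ne hne.symm,
      cnt_Uu_i hne hij, cnt_Uu_j hne hij, cnt_succ hij]
    rcases fin2 (β i) with hi | hi <;> rcases fin2 (β j) with hj | hj <;>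
      simp only [hi, hj, Fintype.sum_prod_type, Fin.sum_univ_two] <;>
      simp [Rmat, Prod.ext_iff, Fin.ext_iff, hQ, pow_succ] <;>
      (set u := q ^ (n - 1 - (j:ℕ)) with hu
       have hu0 : u ≠ 0 := by rw [hu]; exact pow_ne_zero _ hq
       field_simp [hu0]
       try ring)

end Stmt18
namespace Stmt18

variable {n : ℕ} {i j : Fin n}

lemma commF (hij : (i:ℕ) + 1 = (j:ℕ)) (f : T n) (β : Fin n → Fin 2) :
    PhiAux n i j (Fn n f) β = Fn n (PhiAux n i j f) β := by
  have hne : i ≠ j := by rw [Ne, ← Fin.val_eq_val]; omega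
  rw [PhiAux_apply, Fn_apply]
  simp only [Fn_apply, PhiAux_apply, Finset.mul_sum]
  rw [Finset.sum_comm]
  rw [← Finset.sum_erase_add _ _ (Finset.mem_univ j),
      ← Finset.sum_erase_add _ _ (Finset.mem_erase.mpr ⟨hne, Finset.mem_univ i⟩)]
  rw [← Finset.sum_erase_add (Finset.univ) _ (Finset.mem_univ j),
      ← Finset.sum_erase_add _ _ (Finset.mem_erase.mpr ⟨hne, Finset.mem_univ i⟩)]
  rw [add_assoc, add_assoc]
  congr 1
  · -- rest terms
    apply Finset.sum_congr rfl
    intro k hk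
    simp only [Finset.mem_erase] at hk
    have hki := hk.1
    have hkj := hk.2.1
    have hik : i ≠ k := fun h => hki h.symm
    have hjk : j ≠ k := fun h => hkj h.symm
    have hlt : i < k ↔ j < k := by
      rw [← Fin.val_ne_iff] at hki hkj
      rw [Fin.lt_def, Fin.lt_def]; omega
    simp only [Uu_apply_other hne, Uu_update_other hne,
      Function.update_of_ne hik, Function.update_of_ne hjk, hki, hkj,
      ne_eq, not_false_iff]
    by_cases hk0 : β k = 1
    · simp only [hk0, if_true, if_pos rfl]
      apply Finset.sum_congr rfl
      intro p _
      by_cases hR : Rmat (β i, β j) p = 0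
      · simp [hR]
      · have hcnt : cnt (Uu i j β p.1 p.2) k = cnt β k := by
          apply cnt_eq_of _ _ _ hne
          · intro m h1 h2; exact Uu_apply_other hne β _ _ h1 h2
          · simpa [Uu_apply_i hne, Uu_apply_j hne] using (Rmat_wt hR).symm
          · exact hlt
        rw [hcnt]; ring
    · simp [hk0]
  · -- i and j terms
    have hQ : (j:ℕ) = (i:ℕ) + 1 := hij.symm
    have hq : q ≠ 0 := RatFunc.X_ne_zero
    simp only [Uu_apply_i hne, Uu_apply_j hne, update_Uu_i hne, update_Uu_j hne,
      Uu_update_i hne, Uu_update_j hne, Function.update_self,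
      Function.update_of_ne hne, Function.update_of_ne hne.symm,
      cnt_Uu_i hne hij, cnt_Uu_j hne hij, cnt_succ hij]
    rcases fin2 (β i) with hi | hi <;> rcases fin2 (β j) with hj | hj <;>
      simp only [hi, hj, Fintype.sum_prod_type, Fin.sum_univ_two] <;>
      simp [Rmat, Prod.ext_iff, Fin.ext_iff, hQ, pow_succ] <;>
      (set u := q ^ (i:ℕ) with hu
       have hu0 : u ≠ 0 := by rw [hu]; exact pow_ne_zero _ hq
       try field_simp [hu0]
       try ring)

end Stmt18

theorem stmt18 (n t : ℕ) (hn : 2 ≤ n) (ht1 : 1 ≤ t) (ht2 : t ≤ n - 1) :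
    Phi n t ∘ₗ En n = En n ∘ₗ Phi n t ∧ Phi n t ∘ₗ Fn n = Fn n ∘ₗ Phi n t := by
  have h1 : 0 < t ∧ t < n := ⟨ht1, by omega⟩
  rw [Phi, dif_pos h1]
  have hij : ((⟨t - 1, by omega⟩ : Fin n) : ℕ) + 1 = ((⟨t, h1.2⟩ : Fin n) : ℕ) := by
    simp; omega
  constructor
  · exact LinearMap.ext fun f => funext fun β => Stmt18.commE hij f β
  · exact LinearMap.ext fun f => funext fun β => Stmt18.commF hij f β

end
end

section
/- Let n ≥ 2 and 0 ≤ k ≤ n−1. The K-vector space H_k is finite-dimensional of dimension equal to the binomial coefficient (n−1 choose k). -/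
open scoped BigOperators

set_option maxHeartbeats 1000000
set_option synthInstance.maxHeartbeats 400000

noncomputable section

namespace S19

open Finset Function

/-- number of ones strictly before `i` -/
def Nw {n : ℕ} (β : Fin n → Fin 2) (i : Fin n) : ℕ :=
  (Finset.univ.filter (fun j : Fin n => j < i ∧ β j = 1)).card

def Ac (n : ℕ) (β : Fin n → Fin 2) (i : Fin n) : K :=
  (-1 : K) ^ (Nw β i) * q⁻¹ ^ (n - 1 - (i : ℕ))

def Bc (n : ℕ) (β : Fin n → Fin 2) (i : Fin n) : K :=
  (-1 : K) ^ (Nw β i) * q ^ (i : ℕ)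

lemma En_apply (n : ℕ) (f : T n) (β : Fin n → Fin 2) :
    En n f β = ∑ i : Fin n, if β i = 0 then Ac n β i * f (Function.update β i 1) else 0 := rfl

lemma Fn_apply (n : ℕ) (f : T n) (β : Fin n → Fin 2) :
    Fn n f β = ∑ i : Fin n, if β i = 1 then Bc n β i * f (Function.update β i 0) else 0 := rfl

lemma fin2 (x : Fin 2) : x = 0 ∨ x = 1 := by fin_cases x <;> simp

lemma Nw_update_of_not_lt {n : ℕ} {β : Fin n → Fin 2} {i j : Fin n} (h : ¬ i < j) (v : Fin 2) :
    Nw (Function.update β i v) j = Nw β j := by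
  unfold Nw
  congr 1
  apply Finset.filter_congr
  intro x _
  by_cases hx : x = i
  · subst hx
    exact iff_of_false (fun hc => h hc.1) (fun hc => h hc.1)
  · rw [Function.update_of_ne hx]

lemma Nw_update_one_of_lt {n : ℕ} {β : Fin n → Fin 2} {i j : Fin n} (h : i < j) (hβ : β i = 0) :
    Nw (Function.update β i 1) j = Nw β j + 1 := by
  unfold Nw
  have hs : (Finset.univ.filter (fun x : Fin n => x < j ∧ Function.update β i 1 x = 1)) =
      insert i (Finset.univ.filter (fun x : Fin n => x < j ∧ β x = 1)) := by
    ext x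
    simp only [Finset.mem_filter, Finset.mem_insert, Finset.mem_univ, true_and]
    by_cases hx : x = i
    · subst hx; simp [h]
    · rw [Function.update_of_ne hx]; tauto
  rw [hs, Finset.card_insert_of_notMem]
  simp [hβ]

lemma Nw_update_zero_of_lt {n : ℕ} {β : Fin n → Fin 2} {i j : Fin n} (h : i < j) (hβ : β i = 1) :
    Nw (Function.update β i 0) j + 1 = Nw β j := by
  unfold Nw
  have hs : (Finset.univ.filter (fun x : Fin n => x < j ∧ β x = 1)) =
      insert i (Finset.univ.filter (fun x : Fin n => x < j ∧ Function.update β i 0 x = 1)) := by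
    ext x
    simp only [Finset.mem_filter, Finset.mem_insert, Finset.mem_univ, true_and]
    by_cases hx : x = i
    · subst hx; simp [h, hβ]
    · rw [Function.update_of_ne hx]; tauto
  rw [hs, Finset.card_insert_of_notMem]
  simp

lemma wt_update_one {n : ℕ} {β : Fin n → Fin 2} {i : Fin n} (hβ : β i = 0) :
    wt (Function.update β i 1) = wt β + 1 := by
  unfold wt
  have hs : (Finset.univ.filter (fun x : Fin n => Function.update β i 1 x = 1)) =
      insert i (Finset.univ.filter (fun x : Fin n => β x = 1)) := by
    ext x
    simp only [Finset.mem_filter, Finset.mem_insert, Finset.mem_univ, true_and]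
    by_cases hx : x = i
    · subst hx; simp
    · rw [Function.update_of_ne hx]; tauto
  rw [hs, Finset.card_insert_of_notMem]
  simp [hβ]

lemma wt_update_zero {n : ℕ} {β : Fin n → Fin 2} {i : Fin n} (hβ : β i = 1) :
    wt (Function.update β i 0) + 1 = wt β := by
  unfold wt
  have hs : (Finset.univ.filter (fun x : Fin n => β x = 1)) =
      insert i (Finset.univ.filter (fun x : Fin n => Function.update β i 0 x = 1)) := by
    ext x
    simp only [Finset.mem_filter, Finset.mem_insert, Finset.mem_univ, true_and]
    by_cases hx : x = i
    · subst hx; simp [hβ]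
    · rw [Function.update_of_ne hx]; tauto
  rw [hs, Finset.card_insert_of_notMem]
  simp

lemma wt_le {n : ℕ} (β : Fin n → Fin 2) : wt β ≤ n := by
  unfold wt
  exact (Finset.card_filter_le _ _).trans (by simp)

/-- weight space as explicit submodule -/
def Wk (n k : ℕ) : Submodule K (T n) where
  carrier := {f | ∀ β, wt β ≠ k → f β = 0}
  add_mem' := fun hf hg β hβ => by
    simp only [Pi.add_apply, hf β hβ, hg β hβ, add_zero]
  zero_mem' := fun β _ => rfl
  smul_mem' := fun c f hf β hβ => by
    simp only [Pi.smul_apply, hf β hβ, smul_zero]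

lemma mem_Wk {n k : ℕ} {f : T n} : f ∈ Wk n k ↔ ∀ β, wt β ≠ k → f β = 0 := Iff.rfl

lemma expand {n k : ℕ} (f : T n) (hf : f ∈ Wk n k) :
    f = ∑ α ∈ Finset.univ.filter (fun α : Fin n → Fin 2 => wt α = k), f α • v n α := by
  funext γ
  rw [Finset.sum_apply]
  have h1 : ∀ α ∈ Finset.univ.filter (fun α : Fin n → Fin 2 => wt α = k),
      (f α • v n α) γ = if α = γ then f α else 0 := by
    intro α _
    simp only [Pi.smul_apply, v, smul_eq_mul]
    by_cases h : γ = α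
    · subst h; simp
    · rw [if_neg h, if_neg (fun hc => h hc.symm), mul_zero]
  rw [Finset.sum_congr rfl h1, Finset.sum_ite_eq' _ γ (fun α => f α)]
  by_cases h : wt γ = k
  · simp [h]
  · rw [if_neg (by simp [h]), hf γ h]

lemma Tk_eq_Wk (n k : ℕ) : Tk n k = Wk n k := by
  apply le_antisymm
  · apply Submodule.span_le.mpr
    rintro f ⟨α, hα, rfl⟩
    intro β hβ
    show (if β = α then (1:K) else 0) = 0
    rw [if_neg]
    rintro rfl
    exact hβ hα
  · intro f hf
    rw [expand f hf]
    apply Submodule.sum_mem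
    intro α hα
    apply Submodule.smul_mem
    exact Submodule.subset_span ⟨α, (Finset.mem_filter.mp hα).2, rfl⟩

lemma v_eq_basisFun (n : ℕ) (α : Fin n → Fin 2) :
    v n α = Pi.basisFun K (Fin n → Fin 2) α := by
  funext β
  simp [v, Pi.basisFun_apply, Pi.single_apply]

lemma linindep (n k : ℕ) :
    LinearIndependent K (fun α : {α : Fin n → Fin 2 // wt α = k} => v n α) := by
  have h1 := (Pi.basisFun K (Fin n → Fin 2)).linearIndependent
  have h2 := h1.comp (Subtype.val : {α : Fin n → Fin 2 // wt α = k} → _) Subtype.val_injective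
  have h3 : (fun α : {α : Fin n → Fin 2 // wt α = k} => v n α)
      = fun α => Pi.basisFun K (Fin n → Fin 2) α.val := funext fun α => v_eq_basisFun n α.val
  rw [h3]
  exact h2

lemma card_wt (n k : ℕ) :
    Fintype.card {α : Fin n → Fin 2 // wt α = k} = Nat.choose n k := by
  have key : ∀ s : Finset (Fin n),
      (Finset.univ.filter (fun i => (if i ∈ s then (1 : Fin 2) else 0) = 1)) = s := by
    intro s
    ext i
    by_cases h : i ∈ s <;> simp [h]
  let e : {α : Fin n → Fin 2 // wt α = k} ≃ {s : Finset (Fin n) // s.card = k} :=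
    { toFun := fun α => ⟨Finset.univ.filter (fun i => α.1 i = 1), α.2⟩
      invFun := fun s => ⟨fun i => if i ∈ s.1 then 1 else 0, by
        show (Finset.univ.filter _).card = k
        rw [key s.1]; exact s.2⟩
      left_inv := fun α => by
        apply Subtype.ext
        funext i
        rcases fin2 (α.1 i) with h | h <;> simp [h]
      right_inv := fun s => by
        apply Subtype.ext
        exact key s.1 }
  rw [Fintype.card_congr e, Fintype.card_subtype]
  have : Finset.univ.filter (fun s : Finset (Fin n) => s.card = k)
      = Finset.powersetCard k (Finset.univ : Finset (Fin n)) := by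
    rw [Finset.powersetCard_eq_filter, Finset.powerset_univ]
  rw [this, Finset.card_powersetCard, Finset.card_univ, Fintype.card_fin]

lemma finrank_Tk (n k : ℕ) : Module.finrank K (Tk n k) = Nat.choose n k := by
  have h1 : Tk n k = Submodule.span K
      (Set.range (fun α : {α : Fin n → Fin 2 // wt α = k} => v n α)) := by
    unfold Tk
    congr 1
    ext f
    constructor
    · rintro ⟨α, h, rfl⟩; exact ⟨⟨α, h⟩, rfl⟩
    · rintro ⟨⟨α, h⟩, rfl⟩; exact ⟨α, h, rfl⟩
  rw [h1, finrank_span_eq_card (linindep n k), card_wt]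

lemma En_mem_Wk {n k : ℕ} {f : T n} (hf : f ∈ Wk n (k + 1)) : En n f ∈ Wk n k := by
  intro β hβ
  rw [En_apply]
  apply Finset.sum_eq_zero
  intro i _
  split_ifs with h
  · rw [hf _ (by rw [wt_update_one h]; omega), mul_zero]
  · rfl

lemma Fn_mem_Wk {n k : ℕ} {f : T n} (hf : f ∈ Wk n k) : Fn n f ∈ Wk n (k + 1) := by
  intro β hβ
  rw [Fn_apply]
  apply Finset.sum_eq_zero
  intro i _
  split_ifs with h
  · rw [hf _ (by have := wt_update_zero h; omega), mul_zero]
  · rfl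

lemma helper1 {n : ℕ} {c : Prop} [Decidable c] (a : K) (g : Fin n → K) :
    (if c then a * ∑ j, g j else 0) = ∑ j : Fin n, if c then a * g j else 0 := by
  split
  · rw [Finset.mul_sum]
  · simp

lemma helper2 {c d : Prop} [Decidable c] [Decidable d] (a x : K) :
    (if c then a * (if d then x else 0) else 0) = if c ∧ d then a * x else 0 := by
  split_ifs with h1 h2 h3 <;> simp_all

lemma neg_one_sq_pow (m : ℕ) : ((-1 : K) ^ m) * ((-1 : K) ^ m) = 1 := by
  rw [← pow_add, ← two_mul, pow_mul]
  norm_num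

instance : CharZero K :=
  charZero_of_injective_ringHom ((algebraMap (Polynomial ℂ) K).comp (Polynomial.C)).injective

def cn (n : ℕ) : K := ∑ i : Fin n, q⁻¹ ^ (n - 1 - (i : ℕ)) * q ^ (i : ℕ)

lemma q_ne_zero : (q : K) ≠ 0 := RatFunc.X_ne_zero

lemma cn_ne_zero {n : ℕ} (hn : 1 ≤ n) : cn n ≠ 0 := by
  have h1 : ∀ i : Fin n, (q⁻¹ : K) ^ (n - 1 - (i : ℕ)) * q ^ (i : ℕ)
      = q⁻¹ ^ (n - 1) * q ^ (2 * (i : ℕ)) := by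
    intro i
    have hi : (n - 1 - (i : ℕ)) + (i : ℕ) = n - 1 := by have := i.isLt; omega
    have hq : (q⁻¹ : K) ^ (i : ℕ) * q ^ (i : ℕ) = 1 := by
      rw [inv_pow]
      exact inv_mul_cancel₀ (pow_ne_zero _ q_ne_zero)
    have hrw : (q⁻¹ : K) ^ (n - 1) * q ^ (2 * (i : ℕ))
        = q⁻¹ ^ ((n - 1 - (i : ℕ)) + (i : ℕ)) * q ^ ((i : ℕ) + (i : ℕ)) := by
      rw [hi, two_mul]
    rw [hrw]
    linear_combination (-(q⁻¹ ^ (n - 1 - (i : ℕ)) * q ^ (i : ℕ))) * hq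
  have h2 : cn n = q⁻¹ ^ (n - 1) * ∑ i : Fin n, q ^ (2 * (i : ℕ)) := by
    rw [cn, Finset.mul_sum]
    exact Finset.sum_congr rfl fun i _ => h1 i
  rw [h2]
  apply mul_ne_zero (pow_ne_zero _ (inv_ne_zero q_ne_zero))
  have h3 : (∑ i : Fin n, (q : K) ^ (2 * (i : ℕ)))
      = algebraMap (Polynomial ℂ) K (∑ i : Fin n, Polynomial.X ^ (2 * (i : ℕ))) := by
    rw [map_sum]
    exact Finset.sum_congr rfl fun i _ => by
      simp [q, map_pow, RatFunc.algebraMap_X]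
  rw [h3]
  intro hc
  have h4 : (∑ i : Fin n, (Polynomial.X : Polynomial ℂ) ^ (2 * (i : ℕ))) = 0 :=
    RatFunc.algebraMap_injective ℂ (by rw [hc, map_zero])
  have h5 := congrArg (Polynomial.eval 1) h4
  simp [Polynomial.eval_finset_sum] at h5
  omega

lemma En_En (n : ℕ) (f : T n) : En n (En n f) = 0 := by
  funext β
  have hE : En n (En n f) β = ∑ i : Fin n, ∑ j : Fin n,
      (if β i = 0 ∧ Function.update β i 1 j = 0 then
        Ac n β i * (Ac n (Function.update β i 1) j *
          f (Function.update (Function.update β i 1) j 1)) else 0) := by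
    rw [En_apply]
    refine Finset.sum_congr rfl fun i _ => ?_
    rw [En_apply, helper1]
    exact Finset.sum_congr rfl fun j _ => helper2 _ _
  set g : Fin n → Fin n → K := fun i j =>
    (if β i = 0 ∧ Function.update β i 1 j = 0 then
        Ac n β i * (Ac n (Function.update β i 1) j *
          f (Function.update (Function.update β i 1) j 1)) else 0) with hg
  have hskew : ∀ i j, g i j = - g j i := by
    intro i j
    rcases eq_or_ne i j with rfl | hij
    · simp [hg, Function.update_self]
    · rw [hg]
      simp only
      rw [Function.update_of_ne (Ne.symm hij), Function.update_of_ne hij]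
      by_cases hc : β i = 0 ∧ β j = 0
      · rw [if_pos hc, if_pos ⟨hc.2, hc.1⟩]
        have harg : Function.update (Function.update β i 1) j 1
            = Function.update (Function.update β j 1) i 1 := Function.update_comm hij 1 1 β
        have hco : Ac n β i * Ac n (Function.update β i 1) j
            = -(Ac n β j * Ac n (Function.update β j 1) i) := by
          rcases lt_or_gt_of_ne hij with h | h
          · rw [Ac, Ac, Ac, Ac, Nw_update_one_of_lt h hc.1,
              Nw_update_of_not_lt (asymm h) 1]
            ring
          · rw [Ac, Ac, Ac, Ac, Nw_update_one_of_lt h hc.2,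
              Nw_update_of_not_lt (asymm h) 1]
            ring
        rw [harg]
        linear_combination (f (Function.update (Function.update β j 1) i 1)) * hco
      · rw [if_neg hc, if_neg (fun hc2 => hc ⟨hc2.2, hc2.1⟩), neg_zero]
  have h1 : ∑ i : Fin n, ∑ j : Fin n, g i j = - ∑ i : Fin n, ∑ j : Fin n, g i j := by
    conv_lhs => rw [Finset.sum_comm]
    calc ∑ j : Fin n, ∑ i : Fin n, g i j = ∑ j : Fin n, ∑ i : Fin n, -(g j i) := by
          exact Finset.sum_congr rfl fun j _ => Finset.sum_congr rfl fun i _ => hskew i j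
      _ = - ∑ j : Fin n, ∑ i : Fin n, g j i := by rw [← Finset.sum_neg_distrib]; simp
  have h2 : ∑ i : Fin n, ∑ j : Fin n, g i j = 0 := by
    have := h1
    have h3 : (2 : K) * (∑ i : Fin n, ∑ j : Fin n, g i j) = 0 := by
      rw [two_mul]
      nth_rewrite 2 [this]
      ring
    rcases mul_eq_zero.mp h3 with h | h
    · exact absurd h two_ne_zero
    · exact h
  rw [hE, h2]
  rfl

lemma EFFE (n : ℕ) (f : T n) :
    En n (Fn n f) + Fn n (En n f) = cn n • f := by
  funext β
  have hEF : En n (Fn n f) β = ∑ i : Fin n, ∑ j : Fin n,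
      (if β i = 0 ∧ Function.update β i 1 j = 1 then
        Ac n β i * (Bc n (Function.update β i 1) j *
          f (Function.update (Function.update β i 1) j 0)) else 0) := by
    rw [En_apply]
    refine Finset.sum_congr rfl fun i _ => ?_
    rw [Fn_apply, helper1]
    exact Finset.sum_congr rfl fun j _ => helper2 _ _
  have hFE : Fn n (En n f) β = ∑ i : Fin n, ∑ j : Fin n,
      (if β j = 1 ∧ Function.update β j 0 i = 0 then
        Bc n β j * (Ac n (Function.update β j 0) i *
          f (Function.update (Function.update β j 0) i 1)) else 0) := by
    rw [Fn_apply]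
    rw [show (∑ j : Fin n, if β j = 1 then Bc n β j * En n f (Function.update β j 0) else 0)
        = ∑ j : Fin n, ∑ i : Fin n,
          (if β j = 1 ∧ Function.update β j 0 i = 0 then
            Bc n β j * (Ac n (Function.update β j 0) i *
              f (Function.update (Function.update β j 0) i 1)) else 0) from
      Finset.sum_congr rfl fun j _ => by
        rw [En_apply, helper1]
        exact Finset.sum_congr rfl fun i _ => helper2 _ _]
    exact Finset.sum_comm
  have key : ∀ i j : Fin n,
      ((if β i = 0 ∧ Function.update β i 1 j = 1 then
        Ac n β i * (Bc n (Function.update β i 1) j *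
          f (Function.update (Function.update β i 1) j 0)) else 0)
      + (if β j = 1 ∧ Function.update β j 0 i = 0 then
        Bc n β j * (Ac n (Function.update β j 0) i *
          f (Function.update (Function.update β j 0) i 1)) else 0))
      = if j = i then (q⁻¹ ^ (n - 1 - (i : ℕ)) * q ^ (i : ℕ)) * f β else 0 := by
    intro i j
    rcases eq_or_ne j i with rfl | hij
    · rw [if_pos rfl]
      have hsq := neg_one_sq_pow (Nw β j)
      rcases fin2 (β j) with h0 | h1
      · rw [if_pos (show β j = 0 ∧ Function.update β j 1 j = 1 from ⟨h0, by simp⟩),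
          if_neg (show ¬(β j = 1 ∧ Function.update β j 0 j = 0) from
            fun hc => by rw [h0] at hc; exact absurd hc.1 (by decide))]
        have harg : Function.update (Function.update β j 1) j 0 = β := by
          rw [Function.update_idem, ← h0, Function.update_eq_self]
        rw [harg, add_zero, Bc, Nw_update_of_not_lt (lt_irrefl j) 1, Ac]
        linear_combination (q⁻¹ ^ (n - 1 - (j : ℕ)) * q ^ (j : ℕ) * f β) * hsq
      · rw [if_neg (show ¬(β j = 0 ∧ Function.update β j 1 j = 1) from
            fun hc => by rw [h1] at hc; exact absurd hc.1 (by decide)),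
          if_pos (show β j = 1 ∧ Function.update β j 0 j = 0 from ⟨h1, by simp⟩)]
        have harg : Function.update (Function.update β j 0) j 1 = β := by
          rw [Function.update_idem, ← h1, Function.update_eq_self]
        rw [harg, zero_add, Ac, Nw_update_of_not_lt (lt_irrefl j) 0, Bc]
        linear_combination (q⁻¹ ^ (n - 1 - (j : ℕ)) * q ^ (j : ℕ) * f β) * hsq
    · rw [if_neg hij]
      rw [Function.update_of_ne (Ne.symm (fun h => hij h.symm)),
        Function.update_of_ne (fun h => hij h.symm)]
      by_cases hc : β i = 0 ∧ β j = 1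
      · rw [if_pos hc, if_pos ⟨hc.2, hc.1⟩]
        have hne : i ≠ j := fun h => hij h.symm
        have harg : Function.update (Function.update β i 1) j 0
            = Function.update (Function.update β j 0) i 1 := Function.update_comm hne 1 0 β
        have hco : Ac n β i * Bc n (Function.update β i 1) j
            + Bc n β j * Ac n (Function.update β j 0) i = 0 := by
          rcases lt_or_gt_of_ne hne with h | h
          · rw [Ac, Ac, Bc, Bc, Nw_update_one_of_lt h hc.1,
              Nw_update_of_not_lt (asymm h) 0]
            ring
          · rw [Ac, Ac, Bc, Bc, Nw_update_of_not_lt (asymm h) 1,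
              ← Nw_update_zero_of_lt h hc.2]
            ring
        rw [harg]
        linear_combination (f (Function.update (Function.update β j 0) i 1)) * hco
      · rw [if_neg hc, if_neg (fun hc2 => hc ⟨hc2.2, hc2.1⟩), add_zero]
  have hL : (En n (Fn n f) + Fn n (En n f)) β = En n (Fn n f) β + Fn n (En n f) β := rfl
  rw [hL, hEF, hFE, ← Finset.sum_add_distrib]
  have hsum : ∀ i : Fin n, (∑ j : Fin n,
      (if β i = 0 ∧ Function.update β i 1 j = 1 then
        Ac n β i * (Bc n (Function.update β i 1) j *
          f (Function.update (Function.update β i 1) j 0)) else 0))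
      + (∑ j : Fin n,
      (if β j = 1 ∧ Function.update β j 0 i = 0 then
        Bc n β j * (Ac n (Function.update β j 0) i *
          f (Function.update (Function.update β j 0) i 1)) else 0))
      = (q⁻¹ ^ (n - 1 - (i : ℕ)) * q ^ (i : ℕ)) * f β := by
    intro i
    rw [← Finset.sum_add_distrib, Finset.sum_congr rfl (fun j _ => key i j),
      Finset.sum_ite_eq' Finset.univ i (fun _ => (q⁻¹ ^ (n - 1 - (i : ℕ)) * q ^ (i : ℕ)) * f β),
      if_pos (Finset.mem_univ i)]
  rw [Finset.sum_congr rfl (fun i _ => hsum i)]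
  show _ = cn n * f β
  rw [cn, Finset.sum_mul]

lemma Hk_eq_map (n k : ℕ) (hn : 1 ≤ n) :
    Hk n k = Submodule.map (En n) (Tk n (k + 1)) := by
  apply le_antisymm
  · intro x hx
    rw [Hk, Submodule.mem_inf] at hx
    obtain ⟨hker, hTk⟩ := hx
    have hx0 : En n x = 0 := LinearMap.mem_ker.mp hker
    have h1 := EFFE n x
    rw [hx0, map_zero, add_zero] at h1
    refine ⟨(cn n)⁻¹ • Fn n x, ?_, ?_⟩
    · rw [Tk_eq_Wk]
      exact Submodule.smul_mem _ _ (Fn_mem_Wk (by rw [Tk_eq_Wk] at hTk; exact hTk))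
    · rw [map_smul, h1, smul_smul, inv_mul_cancel₀ (cn_ne_zero hn), one_smul]
  · rintro _ ⟨y, hy, rfl⟩
    rw [Hk, Submodule.mem_inf]
    constructor
    · exact LinearMap.mem_ker.mpr (En_En n y)
    · rw [Tk_eq_Wk]
      exact En_mem_Wk (by rw [Tk_eq_Wk] at hy; exact hy)

lemma rank_rec (n k : ℕ) (hn : 1 ≤ n) :
    Module.finrank K (Hk n k) + Module.finrank K (Hk n (k + 1)) = Nat.choose n (k + 1) := by
  let φ := (En n).domRestrict (Tk n (k + 1))
  have h1 : LinearMap.range φ = Submodule.map (En n) (Tk n (k + 1)) :=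
    LinearMap.range_domRestrict (Tk n (k + 1)) (En n)
  have h2 : LinearMap.ker φ = Submodule.comap (Tk n (k + 1)).subtype
      (LinearMap.ker (En n) ⊓ Tk n (k + 1)) := by
    rw [LinearMap.ker_domRestrict (Tk n (k + 1)) (En n), Submodule.comap_inf,
      Submodule.comap_subtype_self, inf_top_eq]
  have e1 : (LinearMap.ker φ) ≃ₗ[K] ↥(Hk n (k + 1)) :=
    (LinearEquiv.ofEq _ _ h2).trans (Submodule.comapSubtypeEquivOfLe inf_le_right)
  have h4 := LinearMap.finrank_range_add_finrank_ker φ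
  have h5 : Module.finrank K ↥(LinearMap.ker φ) = Module.finrank K ↥(Hk n (k + 1)) :=
    LinearEquiv.finrank_eq e1
  have h6 : Module.finrank K ↥(LinearMap.range φ) = Module.finrank K ↥(Hk n k) := by
    rw [h1, ← Hk_eq_map n k hn]
  have h7 := finrank_Tk n (k + 1)
  omega

lemma Hk_big (n k : ℕ) (hk : n < k) : Module.finrank K (Hk n k) = 0 := by
  have hle : Hk n k ≤ Tk n k := inf_le_right
  have := Submodule.finrank_mono hle
  rw [finrank_Tk, Nat.choose_eq_zero_of_lt hk] at this
  omega

lemma aux (n : ℕ) (hn : 1 ≤ n) : ∀ d k : ℕ, n + 1 ≤ k + d →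
    Module.finrank K (Hk n k) = Nat.choose (n - 1) k := by
  intro d
  induction d with
  | zero =>
    intro k hk
    rw [Hk_big n k (by omega), Nat.choose_eq_zero_of_lt (by omega)]
  | succ d ih =>
    intro k hk
    by_cases h : n + 1 ≤ k + d
    · exact ih k h
    · have hkd : k + d = n := by omega
      have hrec := rank_rec n k hn
      have hih := ih (k + 1) (by omega)
      have hpascal : Nat.choose n (k + 1) = Nat.choose (n - 1) k + Nat.choose (n - 1) (k + 1) := by
        have hn1 : n = (n - 1) + 1 := by omega
        rw [hn1]
        exact Nat.choose_succ_succ' (n - 1) k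
      omega

end S19

theorem stmt19 (n k : ℕ) (hn : 2 ≤ n) (hk : k ≤ n - 1) :
    FiniteDimensional K ↥(Hk n k) ∧ Module.finrank K ↥(Hk n k) = Nat.choose (n - 1) k := by
  refine ⟨inferInstance, ?_⟩
  exact S19.aux n (by omega) (n + 1) k (by omega)

end
end
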